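/- Let θ > 0, σ > 1 with θ > σ − 1, λ > 0, π ∈ (0,1], and x̃ > 0, and set m = σ/(σ−1). Then ∫₀^∞ ∫_{z₂}^∞ (min(m · x̃/z₁, x̃/z₂))^{1−σ} · (1/π) · exp(−(λ/π) z₂^{−θ}) · (θ λ z₁^{−θ−1}) · (θ λ z₂^{−θ−1}) dz₁ dz₂ = [1 − (σ−1)/θ + ((σ−1)/θ) m^{−θ}] · Γ((1−σ+θ)/θ) · π · (λ x̃^{−θ} / π)^{(σ−1)/θ}, where Γ is the Gamma function. -/

import Mathlib

set_option maxHeartbeats 1000000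

open MeasureTheory Set Real

lemma inner_eval (θ σ lam x : ℝ)
    (hθ : 0 < θ) (hσ : 1 < σ) (hθσ : σ - 1 < θ) (hlam : 0 < lam) (hx : 0 < x)
    (z₂ : ℝ) (hz₂ : 0 < z₂) :
    ∫ z₁ in Set.Ioi z₂, (min ((σ / (σ - 1)) * x / z₁) (x / z₂)) ^ (1 - σ) * (θ * lam * z₁ ^ (-θ - 1))
      = lam * x ^ (1 - σ) * z₂ ^ (σ - 1 - θ) *
        ((1 - (σ / (σ - 1)) ^ (-θ)) + (σ / (σ - 1)) ^ (-θ) * θ / (θ + 1 - σ)) := by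
  set m : ℝ := σ / (σ - 1) with hm
  have hσ1 : 0 < σ - 1 := by linarith
  have hm1 : 1 < m := by rw [hm, lt_div_iff₀ hσ1]; linarith
  have hm0 : 0 < m := by linarith
  have hmz : z₂ < m * z₂ := by nlinarith
  have hmz0 : 0 < m * z₂ := by positivity
  have e1 : EqOn (fun z₁ : ℝ => ((x / z₂) ^ (1 - σ) * (θ * lam)) * z₁ ^ (-θ - 1))
      (fun z₁ : ℝ => (min (m * x / z₁) (x / z₂)) ^ (1 - σ) * (θ * lam * z₁ ^ (-θ - 1)))
      (Set.Ioc z₂ (m * z₂)) := by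
    intro z₁ hz₁
    have hz₁0 : 0 < z₁ := lt_trans hz₂ hz₁.1
    have hmin : min (m * x / z₁) (x / z₂) = x / z₂ := by
      apply min_eq_right
      rw [div_le_div_iff₀ hz₂ hz₁0]
      nlinarith [hz₁.2]
    simp only [hmin]; ring
  have e2 : EqOn (fun z₁ : ℝ => ((m * x) ^ (1 - σ) * (θ * lam)) * z₁ ^ (σ - θ - 2))
      (fun z₁ : ℝ => (min (m * x / z₁) (x / z₂)) ^ (1 - σ) * (θ * lam * z₁ ^ (-θ - 1)))
      (Set.Ioi (m * z₂)) := by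
    intro z₁ hz₁
    have hz₁0 : 0 < z₁ := lt_trans hmz0 hz₁
    have hmin : min (m * x / z₁) (x / z₂) = m * x / z₁ := by
      apply min_eq_left
      rw [div_le_div_iff₀ hz₁0 hz₂]
      nlinarith [Set.mem_Ioi.mp hz₁]
    have hsplit : (m * x / z₁) ^ (1 - σ) = (m * x) ^ (1 - σ) * z₁ ^ (σ - 1) := by
      rw [div_rpow (by positivity) hz₁0.le, div_eq_mul_inv, ← Real.rpow_neg hz₁0.le]
      norm_num
    have hcomb : z₁ ^ (σ - 1) * z₁ ^ (-θ - 1) = z₁ ^ (σ - θ - 2) := by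
      rw [← Real.rpow_add hz₁0]; ring_nf
    simp only [hmin, hsplit]
    rw [show (m*x)^(1-σ) * z₁^(σ-1) * (θ * lam * z₁^(-θ-1))
        = ((m*x)^(1-σ) * (θ*lam)) * (z₁^(σ-1) * z₁^(-θ-1)) by ring, hcomb]
  have base1 : IntegrableOn (fun z₁ : ℝ => ((x / z₂) ^ (1 - σ) * (θ * lam)) * z₁ ^ (-θ - 1))
      (Set.Ioc z₂ (m * z₂)) :=
    ((integrableOn_Ioi_rpow_of_lt (show -θ-1 < -1 by linarith) hz₂).mono_set
      Set.Ioc_subset_Ioi_self).const_mul _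
  have base2 : IntegrableOn (fun z₁ : ℝ => ((m * x) ^ (1 - σ) * (θ * lam)) * z₁ ^ (σ - θ - 2))
      (Set.Ioi (m * z₂)) :=
    (integrableOn_Ioi_rpow_of_lt (show σ - θ - 2 < -1 by linarith) hmz0).const_mul _
  have i1 := MeasureTheory.IntegrableOn.congr_fun base1 e1 measurableSet_Ioc
  have i2 := MeasureTheory.IntegrableOn.congr_fun base2 e2 measurableSet_Ioi
  rw [← Set.Ioc_union_Ioi_eq_Ioi hmz.le,
    setIntegral_union Set.Ioc_disjoint_Ioi_same measurableSet_Ioi i1 i2,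
    ← setIntegral_congr_fun measurableSet_Ioc e1,
    ← setIntegral_congr_fun measurableSet_Ioi e2,
    integral_const_mul, integral_const_mul,
    ← intervalIntegral.integral_of_le hmz.le,
    integral_rpow (Or.inr ⟨by intro h; linarith [h], by
      rw [Set.mem_uIcc]; push_neg
      constructor <;> intro h <;> [linarith; linarith]⟩),
    integral_Ioi_rpow_of_lt (show σ - θ - 2 < -1 by linarith) hmz0]
  have h1 : (-θ - 1) + 1 = -θ := by ring
  have h2 : (σ - θ - 2) + 1 = σ - θ - 1 := by ring
  rw [h1, h2]
  -- now pure algebra with rpow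
  have hxz : (x / z₂) ^ (1 - σ) = x ^ (1 - σ) * z₂ ^ (σ - 1) := by
    rw [div_rpow hx.le hz₂.le, div_eq_mul_inv, ← Real.rpow_neg hz₂.le]; norm_num
  have hmx : (m * x) ^ (1 - σ) = m ^ (1 - σ) * x ^ (1 - σ) := mul_rpow hm0.le hx.le
  have hmzt : (m * z₂) ^ (-θ) = m ^ (-θ) * z₂ ^ (-θ) := mul_rpow hm0.le hz₂.le
  have hmzs : (m * z₂) ^ (σ - θ - 1) = m ^ (σ - θ - 1) * z₂ ^ (σ - θ - 1) :=
    mul_rpow hm0.le hz₂.le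
  have hz1 : z₂ ^ (σ - 1) * z₂ ^ (-θ) = z₂ ^ (σ - 1 - θ) := by
    rw [← Real.rpow_add hz₂]; ring_nf
  have hz2 : z₂ ^ (σ - θ - 1) = z₂ ^ (σ - 1 - θ) := by ring_nf
  have hmm : m ^ (1 - σ) * m ^ (σ - θ - 1) = m ^ (-θ) := by
    rw [← Real.rpow_add hm0]; ring_nf
  rw [hxz, hmx, hmzt, hmzs, hz2, ← hz1, ← hmm]
  have hne1 : σ - θ - 1 ≠ 0 := by intro h; linarith
  have hne2 : θ + 1 - σ ≠ 0 := by intro h; linarith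
  have hθ' : θ ≠ 0 := hθ.ne'
  generalize x ^ (1 - σ) = a
  generalize z₂ ^ (σ - 1) = b
  generalize z₂ ^ (-θ) = t
  generalize m ^ (1 - σ) = u
  generalize m ^ (σ - θ - 1) = v
  rw [neg_div, div_neg]
  field_simp
  ring

/-- **Source contribution to the CES price index under Bertrand competition.**
A variety won by a source with Fréchet location `λ`, shape `θ`, trade share `p`
and landed cost `x̃` sells at `min (m x̃ / z₁) (x̃ / z₂)` with `m = σ/(σ-1)`;
integrating the price to the power `1-σ` against the joint density of
`(z₁, z₂)` yields
`[1 - (σ-1)/θ + ((σ-1)/θ) m^{-θ}] Γ((1-σ+θ)/θ) p (λ x̃^{-θ}/p)^{(σ-1)/θ}`. -/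
theorem price_contribution_integral (θ σ lam p x : ℝ)
    (hθ : 0 < θ) (hσ : 1 < σ) (hθσ : σ - 1 < θ) (hlam : 0 < lam)
    (hp : p ∈ Set.Ioc (0 : ℝ) 1) (hx : 0 < x) :
    (∫ z₂ in Set.Ioi (0 : ℝ), ∫ z₁ in Set.Ioi z₂,
        (min ((σ / (σ - 1)) * x / z₁) (x / z₂)) ^ (1 - σ) *
          ((1 / p) * Real.exp (-(lam / p) * z₂ ^ (-θ)) *
            (θ * lam * z₁ ^ (-θ - 1)) * (θ * lam * z₂ ^ (-θ - 1))))
      = (1 - (σ - 1) / θ + ((σ - 1) / θ) * (σ / (σ - 1)) ^ (-θ)) *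
          Real.Gamma ((1 - σ + θ) / θ) * p * (lam * x ^ (-θ) / p) ^ ((σ - 1) / θ) := by
  obtain ⟨hp0, hp1⟩ := hp
  have hσ1 : 0 < σ - 1 := by linarith
  have hw : 0 < lam / p := div_pos hlam hp0
  set m : ℝ := σ / (σ - 1) with hm
  set s : ℝ := (1 - σ + θ) / θ with hs
  have hθ' : θ ≠ 0 := hθ.ne'
  have hs0 : 0 < s := by rw [hs]; exact div_pos (by linarith) hθ
  set C : ℝ := (1 - m ^ (-θ)) + m ^ (-θ) * θ / (θ + 1 - σ) with hC
  set K : ℝ := lam * lam * x ^ (1 - σ) * C / p with hK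
  set g : ℝ → ℝ := fun t => t ^ (s + 1 - 1) * Real.exp (-(lam / p * t)) with hg
  have key : Set.EqOn
      (fun z₂ : ℝ => ∫ z₁ in Set.Ioi z₂,
        (min (m * x / z₁) (x / z₂)) ^ (1 - σ) *
          ((1 / p) * Real.exp (-(lam / p) * z₂ ^ (-θ)) *
            (θ * lam * z₁ ^ (-θ - 1)) * (θ * lam * z₂ ^ (-θ - 1))))
      (fun z₂ : ℝ => K * ((|(-θ)| * z₂ ^ ((-θ) - 1)) • g (z₂ ^ (-θ))))
      (Set.Ioi (0 : ℝ)) := by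
    intro z₂ hz₂
    have hz₂ : 0 < z₂ := hz₂
    have step1 : (∫ z₁ in Set.Ioi z₂,
        (min (m * x / z₁) (x / z₂)) ^ (1 - σ) *
          ((1 / p) * Real.exp (-(lam / p) * z₂ ^ (-θ)) *
            (θ * lam * z₁ ^ (-θ - 1)) * (θ * lam * z₂ ^ (-θ - 1))))
        = (∫ z₁ in Set.Ioi z₂, (min (m * x / z₁) (x / z₂)) ^ (1 - σ) * (θ * lam * z₁ ^ (-θ - 1)))
          * ((1 / p) * Real.exp (-(lam / p) * z₂ ^ (-θ)) * (θ * lam * z₂ ^ (-θ - 1))) := by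
      rw [← integral_mul_const]
      exact setIntegral_congr_fun measurableSet_Ioi (fun z₁ _ => by ring)
    simp only [step1, (by have h := inner_eval θ σ lam x hθ hσ hθσ hlam hx z₂ hz₂; rw [← hm] at h; exact h)]
    have hpow : (z₂ ^ (-θ)) ^ (s + 1 - 1) = z₂ ^ (σ - 1 - θ) := by
      rw [← Real.rpow_mul hz₂.le]
      congr 1
      rw [hs]; field_simp; ring
    have habs : |(-θ)| = θ := by rw [abs_neg, abs_of_pos hθ]
    rw [hg]
    simp only [smul_eq_mul, hpow, habs, hK, hC]
    rw [show -(lam / p) * z₂ ^ (-θ) = -(lam / p * z₂ ^ (-θ)) by ring]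
    ring
  rw [hm] at key
  rw [setIntegral_congr_fun measurableSet_Ioi key, integral_const_mul,
    integral_comp_rpow_Ioi g (neg_ne_zero.mpr hθ.ne'),
    show (∫ t in Set.Ioi (0:ℝ), g t)
      = ∫ t in Set.Ioi (0:ℝ), t ^ (s + 1 - 1) * Real.exp (-(lam / p * t)) from rfl,
    Real.integral_rpow_mul_exp_neg_mul_Ioi (by linarith) hw,
    Real.Gamma_add_one hs0.ne']
  -- final algebra
  have hes : (σ - 1) / θ = 1 - s := by rw [hs]; field_simp; ring
  have hxp : (lam * x ^ (-θ) / p) ^ ((σ - 1) / θ)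
      = (lam / p) ^ ((σ - 1) / θ) * x ^ (1 - σ) := by
    rw [show lam * x ^ (-θ) / p = (lam / p) * x ^ (-θ) by ring,
      Real.mul_rpow hw.le (Real.rpow_nonneg hx.le _), ← Real.rpow_mul hx.le,
      show -θ * ((σ - 1) / θ) = 1 - σ by field_simp; ring]
  have hwpow : K * ((1 / (lam / p)) ^ (s + 1) * (s * Real.Gamma s))
      = (C * s) * Real.Gamma s * p * ((lam / p) ^ ((σ - 1) / θ) * x ^ (1 - σ)) := by
    rw [hes, one_div, ← Real.rpow_neg_one (lam / p), ← Real.rpow_mul hw.le,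
      show (-1 : ℝ) * (s + 1) = (1 - s) + -1 + -1 by ring,
      Real.rpow_add hw, Real.rpow_add hw, Real.rpow_neg_one, hK]
    field_simp
  rw [hwpow, hxp]
  have hCs : C * s = 1 - (σ - 1) / θ + ((σ - 1) / θ) * (σ / (σ - 1)) ^ (-θ) := by
    rw [hC, hs, ← hm]
    have h1 : θ + 1 - σ ≠ 0 := by intro h; linarith
    field_simp
    ring
  rw [hCs]
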